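/- The function f(τ) = (τ/(τ−1))·log₂(τ), extended by f(1) = log₂(e), is strictly monotonically increasing on (0, ∞). -/

import Mathlib

open Real

private lemma key_ineq {x : ℝ} (hx : 0 < x) (hne : x ≠ 1) :
    x - 1 < x * Real.log x := by
  have h1 : (1 : ℝ) / x ≠ 1 := by
    intro h
    apply hne
    field_simp at h
    linarith
  have h2 := Real.log_lt_sub_one_of_pos (one_div_pos.mpr hx) h1
  rw [one_div, Real.log_inv] at h2
  have h3 := mul_lt_mul_of_pos_left h2 hx
  have h4 : x * x⁻¹ = 1 := mul_inv_cancel₀ (ne_of_gt hx)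
  nlinarith

private lemma hasDerivAt_phi {x : ℝ} (hx : 0 < x) (hne : x ≠ 1) :
    HasDerivAt (fun t : ℝ => t * Real.log t / (t - 1))
      ((x - 1 - Real.log x) / (x - 1) ^ 2) x := by
  have h1 : HasDerivAt (fun t : ℝ => t * Real.log t) (Real.log x + 1) x := by
    have := (hasDerivAt_id' x).fun_mul (Real.hasDerivAt_log (ne_of_gt hx))
    simpa [mul_inv_cancel₀ (ne_of_gt hx)] using this
  have h2 : HasDerivAt (fun t : ℝ => t - 1) 1 x := (hasDerivAt_id x).sub_const 1
  have h3 := h1.fun_div h2 (sub_ne_zero.mpr hne)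
  exact h3.congr_deriv (by ring)

private lemma deriv_pos {x : ℝ} (hx : 0 < x) (hne : x ≠ 1) :
    0 < (x - 1 - Real.log x) / (x - 1) ^ 2 := by
  apply div_pos
  · have := Real.log_lt_sub_one_of_pos hx hne
    linarith
  · have h : x - 1 ≠ 0 := sub_ne_zero.mpr hne
    positivity

private lemma mono_left : StrictMonoOn (fun t : ℝ => t * Real.log t / (t - 1)) (Set.Ioo 0 1) := by
  apply strictMonoOn_of_deriv_pos (convex_Ioo 0 1)
  · intro x hx
    exact (hasDerivAt_phi hx.1 (ne_of_lt hx.2)).continuousAt.continuousWithinAt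
  · intro x hx
    rw [interior_Ioo] at hx
    rw [(hasDerivAt_phi hx.1 (ne_of_lt hx.2)).deriv]
    exact deriv_pos hx.1 (ne_of_lt hx.2)

private lemma mono_right : StrictMonoOn (fun t : ℝ => t * Real.log t / (t - 1)) (Set.Ioi 1) := by
  apply strictMonoOn_of_deriv_pos (convex_Ioi 1)
  · intro x hx
    have hx1 : (1 : ℝ) < x := hx
    exact (hasDerivAt_phi (by linarith) (ne_of_gt hx1)).continuousAt.continuousWithinAt
  · intro x hx
    rw [interior_Ioi] at hx
    have hx1 : (1 : ℝ) < x := hx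
    rw [(hasDerivAt_phi (by linarith) (ne_of_gt hx1)).deriv]
    exact deriv_pos (by linarith) (ne_of_gt hx1)

private lemma h_lt_one {a : ℝ} (ha : 0 < a) (ha1 : a < 1) :
    a * Real.log a / (a - 1) < 1 := by
  have hd : a - 1 < 0 := by linarith
  have hq : a * Real.log a / (a - 1) * (a - 1) = a * Real.log a :=
    div_mul_cancel₀ _ (ne_of_lt hd)
  have hk := key_ineq ha (ne_of_lt ha1)
  nlinarith

private lemma one_lt_h {b : ℝ} (hb : 1 < b) :
    1 < b * Real.log b / (b - 1) := by
  have hd : 0 < b - 1 := by linarith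
  exact (one_lt_div hd).mpr (key_ineq (by linarith) (ne_of_gt hb))

private lemma mono_h : StrictMonoOn
    (fun τ : ℝ => if τ = 1 then (1 : ℝ) else τ * Real.log τ / (τ - 1))
    (Set.Ioi (0 : ℝ)) := by
  intro x hx y hy hxy
  simp only [Set.mem_Ioi] at hx hy
  simp only []
  rcases lt_trichotomy y 1 with hy1 | hy1 | hy1
  · -- x < y < 1
    have hx1 : x < 1 := by linarith
    rw [if_neg (ne_of_lt hx1), if_neg (ne_of_lt hy1)]
    exact mono_left ⟨hx, hx1⟩ ⟨by linarith, hy1⟩ hxy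
  · -- y = 1
    have hx1 : x < 1 := by linarith
    rw [if_neg (ne_of_lt hx1), if_pos hy1]
    exact h_lt_one hx hx1
  · rcases lt_trichotomy x 1 with hx1 | hx1 | hx1
    · -- x < 1 < y
      rw [if_neg (ne_of_lt hx1), if_neg (ne_of_gt hy1)]
      exact lt_trans (h_lt_one hx hx1) (one_lt_h hy1)
    · -- x = 1 < y
      rw [if_pos hx1, if_neg (ne_of_gt hy1)]
      exact one_lt_h hy1
    · -- 1 < x < y
      rw [if_neg (ne_of_gt hx1), if_neg (ne_of_gt hy1)]
      exact mono_right hx1 hy1 hxy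

/-- `f(τ) = (τ/(τ−1))·log₂ τ`, extended by `f(1) = log₂ e`, is strictly increasing on `(0,∞)`. -/
theorem strictMonoOn_tau_logb :
    StrictMonoOn
      (fun τ : ℝ => if τ = 1 then logb 2 (exp 1) else (τ / (τ - 1)) * logb 2 τ)
      (Set.Ioi (0 : ℝ)) := by
  have hlog2 : 0 < Real.log 2 := Real.log_pos one_lt_two
  have heq : ∀ τ : ℝ,
      (if τ = 1 then logb 2 (exp 1) else (τ / (τ - 1)) * logb 2 τ) =
      (if τ = 1 then (1 : ℝ) else τ * Real.log τ / (τ - 1)) / Real.log 2 := by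
    intro τ
    by_cases h : τ = 1
    · simp [h, Real.logb, Real.log_exp, one_div]
    · rw [if_neg h, if_neg h, Real.logb]
      ring
  intro x hx y hy hxy
  simp only [heq]
  exact (div_lt_div_iff_of_pos_right hlog2).mpr (mono_h hx hy hxy)
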